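/- In the DSG method, assuming the saddle-point assumption, G(z⁽ᵏ⁾) ≠ 0 for all k, and that the chosen subgradient selections g₀, g₁, …, g_m are bounded in norm on every compact subset of ℝⁿ, there exists a constant C > 0 such that ‖G(z⁽ᵏ⁾)‖₂ ≤ C for all k ∈ ℕ. -/

import Mathlib

set_option maxHeartbeats 1000000

open scoped RealInnerProductSpace
open Matrix

/-- `A x` for `A` an `l × n` real matrix and `x ∈ ℝⁿ`, as Euclidean spaces. -/
noncomputable def mulVecE {l n : ℕ} (A : Matrix (Fin l) (Fin n) ℝ)
    (x : EuclideanSpace ℝ (Fin n)) : EuclideanSpace ℝ (Fin l) :=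
  Matrix.toEuclideanLin A x

/-- `F(x) = (max{f₁(x),0}, …, max{f_m(x),0})`. -/
noncomputable def Fplus {n m : ℕ} (f : Fin m → EuclideanSpace ℝ (Fin n) → ℝ)
    (x : EuclideanSpace ℝ (Fin n)) : EuclideanSpace ℝ (Fin m) :=
  (WithLp.equiv 2 (Fin m → ℝ)).symm fun i => max (f i x) 0

/-- The Lagrangian `L(x, λ, ν) = f₀(x) + λᵀF(x) + νᵀ(Ax - b)`. -/
noncomputable def Lag {n m l : ℕ} (f0 : EuclideanSpace ℝ (Fin n) → ℝ)
    (f : Fin m → EuclideanSpace ℝ (Fin n) → ℝ)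
    (A : Matrix (Fin l) (Fin n) ℝ) (b : EuclideanSpace ℝ (Fin l))
    (x : EuclideanSpace ℝ (Fin n)) (lam : EuclideanSpace ℝ (Fin m))
    (nu : EuclideanSpace ℝ (Fin l)) : ℝ :=
  f0 x + ⟪lam, Fplus f x⟫ + ⟪nu, mulVecE A x - b⟫

/-! ### Auxiliary lemmas -/

section pack3
set_option linter.unusedSectionVars false
variable {X Y Z : Type*} [NormedAddCommGroup X] [InnerProductSpace ℝ X]
  [NormedAddCommGroup Y] [InnerProductSpace ℝ Y] [NormedAddCommGroup Z] [InnerProductSpace ℝ Z]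

noncomputable def pack3 (a : X) (b : Y) (c : Z) : WithLp 2 (X × WithLp 2 (Y × Z)) :=
  (WithLp.equiv 2 _).symm (a, (WithLp.equiv 2 _).symm (b, c))

lemma pack3_add (a a' : X) (b b' : Y) (c c' : Z) :
    pack3 (a + a') (b + b') (c + c') = pack3 a b c + pack3 a' b' c' := rfl

lemma pack3_sub (a a' : X) (b b' : Y) (c c' : Z) :
    pack3 (a - a') (b - b') (c - c') = pack3 a b c - pack3 a' b' c' := rfl

lemma pack3_smul (r : ℝ) (a : X) (b : Y) (c : Z) :
    pack3 (r • a) (r • b) (r • c) = r • pack3 a b c := rfl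

lemma pack3_zero : (pack3 (0 : X) (0 : Y) (0 : Z)) = 0 := rfl

lemma pack3_norm_sq (a : X) (b : Y) (c : Z) :
    ‖pack3 a b c‖ ^ 2 = ‖a‖ ^ 2 + ‖b‖ ^ 2 + ‖c‖ ^ 2 := by
  simp only [pack3, WithLp.prod_norm_sq_eq_of_L2, WithLp.equiv_symm_apply, WithLp.toLp_fst,
    WithLp.toLp_snd]
  ring

lemma pack3_inner (a a' : X) (b b' : Y) (c c' : Z) :
    ⟪pack3 a b c, pack3 a' b' c'⟫ = ⟪a, a'⟫ + ⟪b, b'⟫ + ⟪c, c'⟫ := by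
  simp only [pack3, WithLp.prod_inner_apply, WithLp.equiv_symm_apply, WithLp.ofLp_toLp]
  ring

end pack3

lemma dsg_beta_ge_one (β : ℕ → ℝ) (hβ0 : β 0 = 1) (hβ : ∀ k, β (k + 1) = β k + 1 / β k) :
    ∀ k, 1 ≤ β k := by
  intro k
  induction k with
  | zero => rw [hβ0]
  | succ k ih =>
    rw [hβ k]
    have : 0 < 1 / β k := by positivity
    linarith

lemma dsg_abstract {E : Type*} [NormedAddCommGroup E] [InnerProductSpace ℝ E]
    (zstar : E) (z : ℕ → E) (s : ℕ → E) (u : ℕ → E)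
    (β : ℕ → ℝ) (hβ0 : β 0 = 1) (hβ : ∀ k, β (k + 1) = β k + 1 / β k)
    (hs0 : s 0 = 0) (hs : ∀ k, s (k + 1) = s k + u k)
    (hz : ∀ k, z (k + 1) = z 0 - (β k)⁻¹ • s (k + 1))
    (hu : ∀ k, ‖u k‖ = 1)
    (hmono : ∀ k, 0 ≤ ⟪u k, z k - zstar⟫) :
    ∀ k, ‖z k - zstar‖ ≤ ‖z 0 - zstar‖ + 1 := by
  have hβ1 : ∀ k, 1 ≤ β k := dsg_beta_ge_one β hβ0 hβ
  have hβm : ∀ k, β k ≤ β (k + 1) := by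
    intro k
    have h1 := hβ1 k
    have : 0 < 1 / β k := by positivity
    rw [hβ k]; linarith
  obtain ⟨w, hw⟩ : ∃ w : E, w = z 0 - zstar := ⟨_, rfl⟩
  obtain ⟨R, hR⟩ : ∃ R : ℝ, R = ‖w‖ + 1 := ⟨_, rfl⟩
  have hwnn : 0 ≤ ‖w‖ := norm_nonneg _
  have hRpos : 0 < R := by rw [hR]; linarith
  have hsid : ∀ k, s (k + 1) = β k • (z 0 - z (k + 1)) := by
    intro k
    have hβne : β k ≠ 0 := by have := hβ1 k; linarith
    rw [hz k, sub_sub_cancel, smul_smul, mul_inv_cancel₀ hβne, one_smul]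
  suffices H : ∀ k, ‖z k - zstar‖ ≤ R by
    intro k; have := H k; rw [hR, hw] at this; exact this
  intro k
  induction k with
  | zero => rw [← hw, hR]; linarith
  | succ k ih =>
    cases k with
    | zero =>
      have hz1 : z 1 - zstar = w - u 0 := by
        rw [hz 0, hs 0, hs0, hβ0, inv_one, one_smul, zero_add, hw]
        abel
      have hsq : ‖z 1 - zstar‖ ^ 2 = ‖w‖ ^ 2 - 2 * ⟪w, u 0⟫ + 1 := by
        rw [hz1, norm_sub_sq_real, hu 0]; ring
      have hm := hmono 0
      rw [← hw, real_inner_comm] at hm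
      have h1 : ‖z 1 - zstar‖ ^ 2 ≤ R ^ 2 := by
        rw [hsq, hR]; nlinarith
      nlinarith [norm_nonneg (z 1 - zstar)]
    | succ k =>
      obtain ⟨c, hc⟩ : ∃ c : ℝ, c = (β (k + 1))⁻¹ := ⟨_, rfl⟩
      have hβk := hβ1 k
      have hβk1 := hβ1 (k + 1)
      have hβmk := hβm k
      have hβkne : β k ≠ 0 := by linarith
      have hβk1ne : β (k + 1) ≠ 0 := by linarith
      have hcpos : 0 < c := by rw [hc]; positivity
      have hc1 : c ≤ 1 := by
        rw [hc, inv_le_one_iff₀]; right; linarith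
      have hτnn : 0 ≤ β k * c := by positivity
      have hτ1 : β k * c ≤ 1 := by
        rw [hc, ← div_eq_mul_inv, div_le_one (by linarith : (0:ℝ) < β (k + 1))]
        exact hβmk
      have hsum : β k * c + (1 / β k) * c = 1 := by
        rw [hc]
        have hb : β (k + 1) = β k + 1 / β k := hβ k
        field_simp
        rw [hb]
        field_simp
      have he : 1 - β k * c = (1 / β k) * c := by linarith
      obtain ⟨d, hd⟩ : ∃ d : E, d = z (k + 1) - zstar := ⟨_, rfl⟩
      have ihd : ‖d‖ ≤ R := by rw [hd]; exact ih
      have hdnn : 0 ≤ ‖d‖ := norm_nonneg _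
      obtain ⟨v, hv⟩ : ∃ v : E, v = (1 - β k * c) • w + (β k * c) • d := ⟨_, rfl⟩
      have hzz : z (k + 2) - zstar = v - c • u (k + 1) := by
        rw [hv, hd, hw, hz (k + 1), hs (k + 1), hsid k, hc]
        module
      have hennn : 0 ≤ 1 - β k * c := by linarith
      have hvnorm : ‖v‖ ≤ (1 - β k * c) * ‖w‖ + (β k * c) * R := by
        calc ‖v‖ ≤ ‖(1 - β k * c) • w‖ + ‖(β k * c) • d‖ := by rw [hv]; exact norm_add_le _ _
        _ = (1 - β k * c) * ‖w‖ + (β k * c) * ‖d‖ := by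
            rw [norm_smul, norm_smul, Real.norm_eq_abs, Real.norm_eq_abs,
              abs_of_nonneg hennn, abs_of_nonneg hτnn]
        _ ≤ (1 - β k * c) * ‖w‖ + (β k * c) * R := by nlinarith
      have hsq : ‖z (k + 2) - zstar‖ ^ 2 = ‖v‖ ^ 2 - 2 * (c * ⟪v, u (k + 1)⟫) + c ^ 2 := by
        rw [hzz, norm_sub_sq_real, real_inner_smul_right, norm_smul, hu,
          Real.norm_eq_abs, abs_of_nonneg (le_of_lt hcpos)]
        ring
      have hinner : -((1 - β k * c) * ‖w‖) ≤ ⟪v, u (k + 1)⟫ := by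
        have h1 : ⟪v, u (k + 1)⟫
            = (1 - β k * c) * ⟪w, u (k + 1)⟫ + (β k * c) * ⟪d, u (k + 1)⟫ := by
          rw [hv, inner_add_left, real_inner_smul_left, real_inner_smul_left]
        have h2 : 0 ≤ ⟪d, u (k + 1)⟫ := by
          rw [hd, real_inner_comm]; exact hmono (k + 1)
        have h3 : |⟪w, u (k + 1)⟫| ≤ ‖w‖ := by
          have := abs_real_inner_le_norm w (u (k + 1))
          rwa [hu, mul_one] at this
        have h4 : -‖w‖ ≤ ⟪w, u (k + 1)⟫ := by
          have := (abs_le.mp h3).1; linarith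
        nlinarith
      have hvnn : 0 ≤ ‖v‖ := norm_nonneg _
      have hcinv : c ≤ 1 / β k := by
        rw [hc, div_eq_mul_inv, one_mul]
        exact inv_anti₀ (by linarith) hβmk
      have hcsq : c ^ 2 ≤ 1 - β k * c := by
        rw [he]; nlinarith
      have hwR : ‖w‖ = R - 1 := by rw [hR]; ring
      have h5 : ‖v‖ ^ 2 ≤ (R - (1 - β k * c)) ^ 2 := by
        have hvR : ‖v‖ ≤ R - (1 - β k * c) := by rw [hwR] at hvnorm; nlinarith
        nlinarith
      have h6 : -⟪v, u (k + 1)⟫ ≤ (1 - β k * c) * (R - 1) := by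
        rw [← hwR]; linarith
      have h7 : c * -⟪v, u (k + 1)⟫ ≤ 1 * ((1 - β k * c) * (R - 1)) := by
        have := mul_le_mul_of_nonneg_left h6 (le_of_lt hcpos)
        have h8 : c * ((1 - β k * c) * (R - 1)) ≤ 1 * ((1 - β k * c) * (R - 1)) := by
          have : 0 ≤ (1 - β k * c) * (R - 1) := by nlinarith
          nlinarith
        linarith
      have he2 : (1 - β k * c) ^ 2 ≤ 1 - β k * c := by nlinarith
      have hfin : ‖z (k + 2) - zstar‖ ^ 2 ≤ R ^ 2 := by
        rw [hsq]; nlinarith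
      nlinarith [norm_nonneg (z (k + 2) - zstar)]

lemma Fplus_apply {n m : ℕ} (f : Fin m → EuclideanSpace ℝ (Fin n) → ℝ)
    (x : EuclideanSpace ℝ (Fin n)) (i : Fin m) : Fplus f x i = max (f i x) 0 := rfl

lemma mulVecE_adj {l n : ℕ} (A : Matrix (Fin l) (Fin n) ℝ)
    (ν : EuclideanSpace ℝ (Fin l)) (w : EuclideanSpace ℝ (Fin n)) :
    ⟪mulVecE Aᵀ ν, w⟫ = ⟪ν, mulVecE A w⟫ := by
  rw [mulVecE, mulVecE, ← Matrix.conjTranspose_eq_transpose_of_trivial,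
    Matrix.toEuclideanLin_conjTranspose_eq_adjoint, LinearMap.adjoint_inner_left]

lemma mulVecE_sub {l n : ℕ} (A : Matrix (Fin l) (Fin n) ℝ)
    (x y : EuclideanSpace ℝ (Fin n)) : mulVecE A (x - y) = mulVecE A x - mulVecE A y :=
  map_sub (Matrix.toEuclideanLin A) x y

lemma comp_le_norm {m : ℕ} (x : EuclideanSpace ℝ (Fin m)) (i : Fin m) : |x i| ≤ ‖x‖ := by
  have h := EuclideanSpace.norm_eq x
  have h2 : ‖x‖ ^ 2 = ∑ j, ‖x j‖ ^ 2 := by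
    rw [h, Real.sq_sqrt (by positivity)]
  have h3 : ‖x i‖ ^ 2 ≤ ‖x‖ ^ 2 := by
    rw [h2]
    exact Finset.single_le_sum (f := fun j => ‖x j‖ ^ 2) (fun j _ => by positivity)
      (Finset.mem_univ i)
  rw [Real.norm_eq_abs] at h3
  nlinarith [norm_nonneg x, abs_nonneg (x i)]

lemma euc_inner_eq {m : ℕ} (x y : EuclideanSpace ℝ (Fin m)) : ⟪x, y⟫ = ∑ i, x i * y i := by
  simp [PiLp.inner_apply, RCLike.inner_apply, conj_trivial]
  exact Finset.sum_congr rfl fun i _ => mul_comm _ _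

lemma mulVecE_opbound {l n : ℕ} (A : Matrix (Fin l) (Fin n) ℝ) :
    ∃ CA : ℝ, 0 ≤ CA ∧ ∀ x, ‖mulVecE A x‖ ≤ CA * ‖x‖ := by
  refine ⟨‖LinearMap.toContinuousLinearMap (Matrix.toEuclideanLin A)‖, norm_nonneg _, fun x => ?_⟩
  have := (LinearMap.toContinuousLinearMap (Matrix.toEuclideanLin A)).le_opNorm x
  simpa [mulVecE] using this

/-- DSG: the subgradients `G(z⁽ᵏ⁾)` are uniformly bounded in norm. -/
theorem dsg_gradient_bound
    (n m l : ℕ)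
    (f0 : EuclideanSpace ℝ (Fin n) → ℝ)
    (f : Fin m → EuclideanSpace ℝ (Fin n) → ℝ)
    (hf0 : ConvexOn ℝ Set.univ f0)
    (hf : ∀ i, ConvexOn ℝ Set.univ (f i))
    (A : Matrix (Fin l) (Fin n) ℝ) (b : EuclideanSpace ℝ (Fin l))
    (pstar : ℝ)
    (xstar : EuclideanSpace ℝ (Fin n))
    (lamstar : EuclideanSpace ℝ (Fin m)) (nustar : EuclideanSpace ℝ (Fin l))
    -- x* is primal optimal with value p*
    (hxfeas : ∀ i, f i xstar ≤ 0) (hxeq : mulVecE A xstar = b)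
    (hxval : f0 xstar = pstar)
    -- saddle-point assumption
    (hlamstar : ∀ i, 0 ≤ lamstar i)
    (hsaddle_eq : Lag f0 f A b xstar lamstar nustar = pstar)
    (hsaddle1 : ∀ (lam : EuclideanSpace ℝ (Fin m)) (nu : EuclideanSpace ℝ (Fin l)),
      (∀ i, 0 ≤ lam i) → Lag f0 f A b xstar lam nu ≤ pstar)
    (hsaddle2 : ∀ x, pstar ≤ Lag f0 f A b x lamstar nustar)
    -- fixed subgradient selections g₀(x) ∈ ∂f₀(x), gᵢ(x) ∈ ∂Fᵢ(x)
    (g0 : EuclideanSpace ℝ (Fin n) → EuclideanSpace ℝ (Fin n))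
    (hg0 : ∀ x y, ⟪g0 x, y - x⟫ ≤ f0 y - f0 x)
    (g : Fin m → EuclideanSpace ℝ (Fin n) → EuclideanSpace ℝ (Fin n))
    (hg : ∀ i x y, ⟪g i x, y - x⟫ ≤ max (f i y) 0 - max (f i x) 0)
    -- the DSG iterates z⁽ᵏ⁾ = (x⁽ᵏ⁾, λ⁽ᵏ⁾, ν⁽ᵏ⁾)
    (xk : ℕ → EuclideanSpace ℝ (Fin n))
    (lamk : ℕ → EuclideanSpace ℝ (Fin m))
    (nuk : ℕ → EuclideanSpace ℝ (Fin l))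
    (hlam0 : ∀ i, 0 ≤ lamk 0 i)
    -- G(z⁽ᵏ⁾): primal component Gx k and total Euclidean norm nG k
    (Gx : ℕ → EuclideanSpace ℝ (Fin n))
    (hGx : ∀ k, Gx k
      = g0 (xk k) + (∑ i, lamk k i • g i (xk k)) + mulVecE Aᵀ (nuk k))
    (nG : ℕ → ℝ)
    (hnG : ∀ k, nG k = Real.sqrt (‖Gx k‖ ^ 2 + ‖Fplus f (xk k)‖ ^ 2
      + ‖mulVecE A (xk k) - b‖ ^ 2))
    -- G(z⁽ᵏ⁾) ≠ 0
    (hGne : ∀ k, ¬ (Gx k = 0 ∧ Fplus f (xk k) = 0 ∧ mulVecE A (xk k) - b = 0))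
    -- the averaging sequences s⁽ᵏ⁾ and weights β
    (sx : ℕ → EuclideanSpace ℝ (Fin n))
    (slam : ℕ → EuclideanSpace ℝ (Fin m))
    (snu : ℕ → EuclideanSpace ℝ (Fin l))
    (hs0 : sx 0 = 0 ∧ slam 0 = 0 ∧ snu 0 = 0)
    (hsx : ∀ k, sx (k + 1) = sx k + (nG k)⁻¹ • Gx k)
    (hslam : ∀ k, slam (k + 1) = slam k + (nG k)⁻¹ • (-(Fplus f (xk k))))
    (hsnu : ∀ k, snu (k + 1) = snu k + (nG k)⁻¹ • (-(mulVecE A (xk k) - b)))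
    (β : ℕ → ℝ) (hβ0 : β 0 = 1) (hβ : ∀ k, β (k + 1) = β k + 1 / β k)
    (hxk : ∀ k, xk (k + 1) = xk 0 - (β k)⁻¹ • sx (k + 1))
    (hlamk : ∀ k, lamk (k + 1) = lamk 0 - (β k)⁻¹ • slam (k + 1))
    (hnuk : ∀ k, nuk (k + 1) = nuk 0 - (β k)⁻¹ • snu (k + 1))
    -- the chosen subgradient selections are bounded in norm on compact sets
    (hbdd : ∀ B : Set (EuclideanSpace ℝ (Fin n)), IsCompact B →
      ∃ M : ℝ, ∀ x ∈ B, ‖g0 x‖ ≤ M ∧ ∀ i, ‖g i x‖ ≤ M) :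
    ∃ C : ℝ, 0 < C ∧ ∀ k : ℕ, nG k ≤ C := by
  classical
  have hβ1 : ∀ k, 1 ≤ β k := dsg_beta_ge_one β hβ0 hβ
  have hnGsq : ∀ k, nG k ^ 2
      = ‖Gx k‖ ^ 2 + ‖Fplus f (xk k)‖ ^ 2 + ‖mulVecE A (xk k) - b‖ ^ 2 := by
    intro k; rw [hnG k, Real.sq_sqrt (by positivity)]
  have hnGpos : ∀ k, 0 < nG k := by
    intro k
    rw [hnG k]
    apply Real.sqrt_pos.mpr
    by_contra hle
    push_neg at hle
    have hn1 := norm_nonneg (Gx k)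
    have hn2 := norm_nonneg (Fplus f (xk k))
    have hn3 := norm_nonneg (mulVecE A (xk k) - b)
    refine hGne k ⟨norm_eq_zero.mp (le_antisymm (by nlinarith) hn1),
      norm_eq_zero.mp (le_antisymm (by nlinarith) hn2),
      norm_eq_zero.mp (le_antisymm (by nlinarith) hn3)⟩
  have hFnn : ∀ k i, 0 ≤ Fplus f (xk k) i := fun k i => by
    rw [Fplus_apply]; exact le_max_right _ _
  -- λ⁽ᵏ⁾ ≥ 0
  have hslamle : ∀ k, ∀ i, slam k i ≤ 0 := by
    intro k
    induction k with
    | zero => intro i; rw [hs0.2.1]; simp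
    | succ k ih =>
      intro i
      rw [hslam k]
      have happ : (slam k + (nG k)⁻¹ • -Fplus f (xk k)) i
          = slam k i + (nG k)⁻¹ * (-(Fplus f (xk k) i)) := by simp
      rw [happ]
      have h1 := ih i
      have h2 := hFnn k i
      have h3 : 0 ≤ (nG k)⁻¹ := le_of_lt (inv_pos.mpr (hnGpos k))
      nlinarith
  have hlamnn : ∀ k i, 0 ≤ lamk k i := by
    intro k
    cases k with
    | zero => exact hlam0
    | succ k =>
      intro i
      rw [hlamk k]
      have happ : (lamk 0 - (β k)⁻¹ • slam (k + 1)) i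
          = lamk 0 i - (β k)⁻¹ * slam (k + 1) i := by simp
      rw [happ]
      have h1 := hlam0 i
      have h2 := hslamle (k + 1) i
      have hb : (0:ℝ) < β k := lt_of_lt_of_le one_pos (hβ1 k)
      have h3 : 0 ≤ (β k)⁻¹ := by positivity
      nlinarith
  -- key monotonicity inequality
  have hK : ∀ k, 0 ≤ ⟪Gx k, xk k - xstar⟫ - ⟪Fplus f (xk k), lamk k - lamstar⟫
      - ⟪mulVecE A (xk k) - b, nuk k - nustar⟫ := by
    intro k
    have h0 : f0 (xk k) - f0 xstar ≤ ⟪g0 (xk k), xk k - xstar⟫ := by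
      have h := hg0 (xk k) xstar
      have heq : ⟪g0 (xk k), xk k - xstar⟫ = -⟪g0 (xk k), xstar - xk k⟫ := by
        rw [← inner_neg_right, neg_sub]
      linarith
    have hFstar : ∀ i, max (f i xstar) 0 = 0 := fun i => max_eq_right (hxfeas i)
    have hgi : ∀ i, max (f i (xk k)) 0 ≤ ⟪g i (xk k), xk k - xstar⟫ := by
      intro i
      have h := hg i (xk k) xstar
      rw [hFstar i] at h
      have heq : ⟪g i (xk k), xk k - xstar⟫ = -⟪g i (xk k), xstar - xk k⟫ := by
        rw [← inner_neg_right, neg_sub]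
      linarith
    have hsum : ⟪∑ i, lamk k i • g i (xk k), xk k - xstar⟫
        = ∑ i, lamk k i * ⟪g i (xk k), xk k - xstar⟫ := by
      rw [sum_inner]
      exact Finset.sum_congr rfl fun i _ => real_inner_smul_left _ _ _
    have hsum2 : ⟪lamk k, Fplus f (xk k)⟫ ≤ ∑ i, lamk k i * ⟪g i (xk k), xk k - xstar⟫ := by
      rw [euc_inner_eq]
      refine Finset.sum_le_sum fun i _ => ?_
      have h := mul_le_mul_of_nonneg_left (hgi i) (hlamnn k i)
      rw [Fplus_apply]
      linarith
    have hAdj : ⟪mulVecE Aᵀ (nuk k), xk k - xstar⟫ = ⟪nuk k, mulVecE A (xk k) - b⟫ := by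
      rw [mulVecE_adj, mulVecE_sub, hxeq]
    have hGxi : ⟪Gx k, xk k - xstar⟫ = ⟪g0 (xk k), xk k - xstar⟫
        + ∑ i, lamk k i * ⟪g i (xk k), xk k - xstar⟫ + ⟪nuk k, mulVecE A (xk k) - b⟫ := by
      rw [hGx k, inner_add_left, inner_add_left, hsum, hAdj]
    have hsad := hsaddle2 (xk k)
    rw [Lag, ← hxval] at hsad
    have hA2 : ⟪Fplus f (xk k), lamk k - lamstar⟫
        = ⟪lamk k, Fplus f (xk k)⟫ - ⟪lamstar, Fplus f (xk k)⟫ := by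
      rw [inner_sub_right, real_inner_comm (Fplus f (xk k)) (lamk k),
        real_inner_comm (Fplus f (xk k)) lamstar]
    have hA3 : ⟪mulVecE A (xk k) - b, nuk k - nustar⟫
        = ⟪nuk k, mulVecE A (xk k) - b⟫ - ⟪nustar, mulVecE A (xk k) - b⟫ := by
      rw [inner_sub_right, real_inner_comm (mulVecE A (xk k) - b) (nuk k),
        real_inner_comm (mulVecE A (xk k) - b) nustar]
    linarith
  -- packaging into the product Hilbert space
  have hGnorm : ∀ k,
      ‖pack3 (Gx k) (-(Fplus f (xk k))) (-(mulVecE A (xk k) - b))‖ = nG k := by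
    intro k
    have h2 : ‖pack3 (Gx k) (-(Fplus f (xk k))) (-(mulVecE A (xk k) - b))‖ ^ 2
        = nG k ^ 2 := by
      rw [pack3_norm_sq, norm_neg, norm_neg, hnGsq k]
    calc ‖pack3 (Gx k) (-(Fplus f (xk k))) (-(mulVecE A (xk k) - b))‖
        = Real.sqrt (‖pack3 (Gx k) (-(Fplus f (xk k))) (-(mulVecE A (xk k) - b))‖ ^ 2) :=
          (Real.sqrt_sq (norm_nonneg _)).symm
      _ = Real.sqrt (nG k ^ 2) := by rw [h2]
      _ = nG k := Real.sqrt_sq (le_of_lt (hnGpos k))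
  have hs0' : pack3 (sx 0) (slam 0) (snu 0) = 0 := by
    rw [hs0.1, hs0.2.1, hs0.2.2]; exact pack3_zero
  have hs' : ∀ k, pack3 (sx (k + 1)) (slam (k + 1)) (snu (k + 1))
      = pack3 (sx k) (slam k) (snu k)
        + (nG k)⁻¹ • pack3 (Gx k) (-(Fplus f (xk k))) (-(mulVecE A (xk k) - b)) := by
    intro k
    rw [hsx k, hslam k, hsnu k, pack3_add, pack3_smul]
  have hz' : ∀ k, pack3 (xk (k + 1)) (lamk (k + 1)) (nuk (k + 1))
      = pack3 (xk 0) (lamk 0) (nuk 0)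
        - (β k)⁻¹ • pack3 (sx (k + 1)) (slam (k + 1)) (snu (k + 1)) := by
    intro k
    rw [hxk k, hlamk k, hnuk k, pack3_sub, pack3_smul]
  have hu' : ∀ k,
      ‖(nG k)⁻¹ • pack3 (Gx k) (-(Fplus f (xk k))) (-(mulVecE A (xk k) - b))‖ = 1 := by
    intro k
    rw [norm_smul, hGnorm k, Real.norm_eq_abs, abs_of_pos (inv_pos.mpr (hnGpos k)),
      inv_mul_cancel₀ (ne_of_gt (hnGpos k))]
  have hmono' : ∀ k, 0 ≤
      ⟪(nG k)⁻¹ • pack3 (Gx k) (-(Fplus f (xk k))) (-(mulVecE A (xk k) - b)),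
        pack3 (xk k) (lamk k) (nuk k) - pack3 xstar lamstar nustar⟫ := by
    intro k
    rw [real_inner_smul_left, ← pack3_sub, pack3_inner, inner_neg_left, inner_neg_left]
    have h1 : 0 ≤ (nG k)⁻¹ := le_of_lt (inv_pos.mpr (hnGpos k))
    have h2 := hK k
    nlinarith
  have hbound := dsg_abstract (pack3 xstar lamstar nustar)
    (fun k => pack3 (xk k) (lamk k) (nuk k))
    (fun k => pack3 (sx k) (slam k) (snu k))
    (fun k => (nG k)⁻¹ • pack3 (Gx k) (-(Fplus f (xk k))) (-(mulVecE A (xk k) - b)))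
    β hβ0 hβ hs0' hs' hz' hu' hmono'
  obtain ⟨R0, hR0⟩ : ∃ R0 : ℝ,
      R0 = ‖pack3 (xk 0) (lamk 0) (nuk 0) - pack3 xstar lamstar nustar‖ + 1 := ⟨_, rfl⟩
  have hR0nn : 0 ≤ R0 := by rw [hR0]; positivity
  have hcomp : ∀ k, ‖xk k - xstar‖ ≤ R0 ∧ ‖lamk k - lamstar‖ ≤ R0
      ∧ ‖nuk k - nustar‖ ≤ R0 := by
    intro k
    have h := hbound k
    rw [← hR0, ← pack3_sub] at h
    have h2 := pack3_norm_sq (xk k - xstar) (lamk k - lamstar) (nuk k - nustar)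
    have hn0 := norm_nonneg (pack3 (xk k - xstar) (lamk k - lamstar) (nuk k - nustar))
    have hn1 := norm_nonneg (xk k - xstar)
    have hn2 := norm_nonneg (lamk k - lamstar)
    have hn3 := norm_nonneg (nuk k - nustar)
    refine ⟨by nlinarith, by nlinarith, by nlinarith⟩
  obtain ⟨M, hM⟩ := hbdd (Metric.closedBall xstar R0) (isCompact_closedBall _ _)
  have hmem : ∀ k, xk k ∈ Metric.closedBall xstar R0 := by
    intro k; rw [Metric.mem_closedBall, dist_eq_norm]; exact (hcomp k).1
  have hMnn : 0 ≤ M := le_trans (norm_nonneg _) (hM (xk 0) (hmem 0)).1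
  obtain ⟨CA, hCAnn, hCA⟩ := mulVecE_opbound A
  obtain ⟨CAT, hCATnn, hCAT⟩ := mulVecE_opbound Aᵀ
  obtain ⟨Rlam, hRlam⟩ : ∃ r : ℝ, r = ‖lamstar‖ + R0 := ⟨_, rfl⟩
  obtain ⟨Rnu, hRnu⟩ : ∃ r : ℝ, r = ‖nustar‖ + R0 := ⟨_, rfl⟩
  have hRlnn : 0 ≤ Rlam := by rw [hRlam]; positivity
  have hRnnn : 0 ≤ Rnu := by rw [hRnu]; positivity
  have hlamb : ∀ k, ‖lamk k‖ ≤ Rlam := by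
    intro k
    have h := norm_add_le (lamk k - lamstar) lamstar
    rw [sub_add_cancel] at h
    rw [hRlam]
    have := (hcomp k).2.1
    linarith [norm_nonneg lamstar]
  have hnub : ∀ k, ‖nuk k‖ ≤ Rnu := by
    intro k
    have h := norm_add_le (nuk k - nustar) nustar
    rw [sub_add_cancel] at h
    rw [hRnu]
    have := (hcomp k).2.2
    linarith [norm_nonneg nustar]
  have hGxb : ∀ k, ‖Gx k‖ ≤ M + m * (Rlam * M) + CAT * Rnu := by
    intro k
    rw [hGx k]
    have h1 : ‖g0 (xk k)‖ ≤ M := (hM _ (hmem k)).1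
    have h2 : ‖∑ i, lamk k i • g i (xk k)‖ ≤ m * (Rlam * M) := by
      calc ‖∑ i, lamk k i • g i (xk k)‖ ≤ ∑ i, ‖lamk k i • g i (xk k)‖ :=
            norm_sum_le _ _
        _ ≤ ∑ _i : Fin m, Rlam * M := Finset.sum_le_sum fun i _ => by
            rw [norm_smul, Real.norm_eq_abs]
            exact mul_le_mul (le_trans (comp_le_norm _ i) (hlamb k))
              ((hM _ (hmem k)).2 i) (norm_nonneg _) hRlnn
        _ = m * (Rlam * M) := by
            rw [Finset.sum_const, Finset.card_univ, Fintype.card_fin, nsmul_eq_mul]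
    have h3 : ‖mulVecE Aᵀ (nuk k)‖ ≤ CAT * Rnu :=
      le_trans (hCAT (nuk k)) (mul_le_mul_of_nonneg_left (hnub k) hCATnn)
    calc ‖g0 (xk k) + (∑ i, lamk k i • g i (xk k)) + mulVecE Aᵀ (nuk k)‖
        ≤ ‖g0 (xk k)‖ + ‖∑ i, lamk k i • g i (xk k)‖ + ‖mulVecE Aᵀ (nuk k)‖ :=
          norm_add₃_le
      _ ≤ M + m * (Rlam * M) + CAT * Rnu := by linarith
  have hFb : ∀ k, ‖Fplus f (xk k)‖ ^ 2 ≤ m * (M * R0) ^ 2 := by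
    intro k
    have hsq : ‖Fplus f (xk k)‖ ^ 2 = ∑ i, ‖Fplus f (xk k) i‖ ^ 2 := by
      rw [EuclideanSpace.norm_eq, Real.sq_sqrt (by positivity)]
    rw [hsq]
    calc (∑ i, ‖Fplus f (xk k) i‖ ^ 2) ≤ ∑ _i : Fin m, (M * R0) ^ 2 := by
          refine Finset.sum_le_sum fun i _ => ?_
          have hgik := hg i (xk k) xstar
          rw [max_eq_right (hxfeas i)] at hgik
          have heq : ⟪g i (xk k), xk k - xstar⟫ = -⟪g i (xk k), xstar - xk k⟫ := by
            rw [← inner_neg_right, neg_sub]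
          have hcs := real_inner_le_norm (g i (xk k)) (xk k - xstar)
          have hgb : ‖g i (xk k)‖ * ‖xk k - xstar‖ ≤ M * R0 :=
            mul_le_mul ((hM _ (hmem k)).2 i) (hcomp k).1 (norm_nonneg _) hMnn
          have hFle : Fplus f (xk k) i ≤ M * R0 := by
            rw [Fplus_apply]; linarith
          rw [Real.norm_eq_abs, abs_of_nonneg (hFnn k i)]
          exact pow_le_pow_left₀ (hFnn k i) hFle 2
      _ = m * (M * R0) ^ 2 := by
          rw [Finset.sum_const, Finset.card_univ, Fintype.card_fin, nsmul_eq_mul]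
  have hAb : ∀ k, ‖mulVecE A (xk k) - b‖ ≤ CA * R0 := by
    intro k
    rw [← hxeq, ← mulVecE_sub]
    exact le_trans (hCA _) (mul_le_mul_of_nonneg_left (hcomp k).1 hCAnn)
  obtain ⟨C1, hC1⟩ : ∃ c : ℝ, c = M + m * (Rlam * M) + CAT * Rnu := ⟨_, rfl⟩
  obtain ⟨K, hKdef⟩ : ∃ c : ℝ, c = C1 ^ 2 + m * (M * R0) ^ 2 + (CA * R0) ^ 2 := ⟨_, rfl⟩
  have hKnn : 0 ≤ K := by
    rw [hKdef]
    have : (0:ℝ) ≤ m * (M * R0) ^ 2 := by positivity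
    nlinarith [sq_nonneg C1, sq_nonneg (CA * R0)]
  refine ⟨Real.sqrt K + 1, by positivity, fun k => ?_⟩
  rw [hnG k]
  have hS : ‖Gx k‖ ^ 2 + ‖Fplus f (xk k)‖ ^ 2 + ‖mulVecE A (xk k) - b‖ ^ 2 ≤ K := by
    have b1 : ‖Gx k‖ ^ 2 ≤ C1 ^ 2 := by
      rw [hC1]; exact pow_le_pow_left₀ (norm_nonneg _) (hGxb k) 2
    have b3 : ‖mulVecE A (xk k) - b‖ ^ 2 ≤ (CA * R0) ^ 2 :=
      pow_le_pow_left₀ (norm_nonneg _) (hAb k) 2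
    have b2 := hFb k
    rw [hKdef]; linarith
  calc Real.sqrt (‖Gx k‖ ^ 2 + ‖Fplus f (xk k)‖ ^ 2 + ‖mulVecE A (xk k) - b‖ ^ 2)
      ≤ Real.sqrt K := Real.sqrt_le_sqrt hS
    _ ≤ Real.sqrt K + 1 := by linarith [Real.sqrt_nonneg K]
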